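/- Let X be a continuum that is 1-dimensional in the sense of measure: there is an atomless Borel probability measure μ such that μ(Y_n) → 0 implies diam(Y_n) → 0 for any sequence of subcontinua (Y_n). Then X is locally connected (a Peano continuum). -/
import Mathlib


open MeasureTheory Filter Set Metric Topology

/-- In a T2 space, components of compact sets are compact. -/
lemma aux_isCompact_connectedComponentIn {X : Type*} [TopologicalSpace X] [T2Space X]
    {K : Set X} (hK : IsCompact K) (q : X) : IsCompact (connectedComponentIn K q) := by
  by_cases hq : q ∈ K
  · rw [connectedComponentIn_eq_image hq]
    haveI : CompactSpace ↥K := isCompact_iff_compactSpace.mp hK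
    exact isClosed_connectedComponent.isCompact.image continuous_subtype_val
  · rw [connectedComponentIn_eq_empty hq]; exact isCompact_empty

/-- Boundary bumping: in a compact connected T2 space, every component of a proper
closed subset meets the frontier of that subset. -/
lemma aux_bumping {X : Type*} [TopologicalSpace X] [T2Space X] [CompactSpace X]
    [PreconnectedSpace X] {K : Set X} (hKcl : IsClosed K) (hKne : K ≠ Set.univ)
    {q : X} (hq : q ∈ K) : (connectedComponentIn K q ∩ frontier K).Nonempty := by
  by_contra hcon
  rw [Set.not_nonempty_iff_eq_empty] at hcon
  haveI : CompactSpace ↥K := isCompact_iff_compactSpace.mp hKcl.isCompact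
  set pt : ↥K := ⟨q, hq⟩ with hpt
  set F : Set ↥K := Subtype.val ⁻¹' frontier K with hFdef
  have hFc : IsCompact F := (isClosed_frontier.preimage continuous_subtype_val).isCompact
  haveI : Nonempty {s : Set ↥K // IsClopen s ∧ pt ∈ s} :=
    ⟨⟨Set.univ, isClopen_univ, Set.mem_univ _⟩⟩
  have hinter : (F ∩ ⋂ s : {s : Set ↥K // IsClopen s ∧ pt ∈ s}, (s : Set ↥K)) = ∅ := by
    rw [← connectedComponent_eq_iInter_isClopen pt]
    ext z; simp only [Set.mem_inter_iff, Set.mem_empty_iff_false, iff_false, not_and]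
    intro hzF hzc
    have hz1 : (z : X) ∈ connectedComponentIn K q := by
      rw [connectedComponentIn_eq_image hq]
      exact ⟨z, hzc, rfl⟩
    have hmem : (z : X) ∈ connectedComponentIn K q ∩ frontier K := ⟨hz1, hzF⟩
    rw [hcon] at hmem
    exact hmem
  obtain ⟨Z, hZ⟩ := hFc.elim_directed_family_closed
    (fun s : {s : Set ↥K // IsClopen s ∧ pt ∈ s} => (s : Set ↥K))
    (fun s => s.2.1.isClosed) hinter
    (fun a b => ⟨⟨a.1 ∩ b.1, a.2.1.inter b.2.1, ⟨a.2.2, b.2.2⟩⟩,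
      Set.inter_subset_left, Set.inter_subset_right⟩)
  set A : Set X := Subtype.val '' (Z : Set ↥K) with hAdef
  have hAK : A ⊆ K := by rintro _ ⟨z, _, rfl⟩; exact z.2
  have hAcl : IsClosed A := (Z.2.1.isClosed.isCompact.image continuous_subtype_val).isClosed
  have hAfr : ∀ a ∈ A, a ∉ frontier K := by
    rintro _ ⟨z, hz, rfl⟩ hfr
    have hmem : z ∈ F ∩ (Z : Set ↥K) := ⟨hfr, hz⟩
    rw [hZ] at hmem
    exact hmem
  have hAint : A ⊆ interior K := by
    intro a ha
    by_contra hnot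
    apply hAfr a ha
    rw [hKcl.frontier_eq]
    exact ⟨hAK ha, hnot⟩
  obtain ⟨V, hVopen, hVZ⟩ := isOpen_induced_iff.mp Z.2.1.isOpen
  have hAeq : A = V ∩ interior K := by
    apply Set.Subset.antisymm
    · rintro _ ⟨z, hz, rfl⟩
      refine ⟨?_, hAint ⟨z, hz, rfl⟩⟩
      have hzV : z ∈ Subtype.val ⁻¹' V := by rw [hVZ]; exact hz
      exact hzV
    · rintro a ⟨haV, haI⟩
      have haK : a ∈ K := interior_subset haI
      have hmem : (⟨a, haK⟩ : ↥K) ∈ Subtype.val ⁻¹' V := haV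
      rw [hVZ] at hmem
      exact ⟨⟨a, haK⟩, hmem, rfl⟩
  have hAopen : IsOpen A := hAeq ▸ hVopen.inter isOpen_interior
  have hAne : A.Nonempty := ⟨q, ⟨pt, Z.2.2, rfl⟩⟩
  have hAuniv : A = Set.univ := IsClopen.eq_univ ⟨hAcl, hAopen⟩ hAne
  exact hKne (Set.eq_univ_of_univ_subset (hAuniv ▸ hAK))

/-- a continuum 1-dimensional in the sense of measure is locally
connected (a Peano continuum). -/
theorem stmt7 {X : Type*} [MetricSpace X] [CompactSpace X] [ConnectedSpace X]
    [Nonempty X] [MeasurableSpace X] [BorelSpace X]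
    (μ : Measure X) [IsProbabilityMeasure μ]
    (hatomless : ∀ x : X, μ {x} = 0)
    (hμ : ∀ Y : ℕ → Set X,
      (∀ n, (Y n).Nonempty ∧ IsCompact (Y n) ∧ IsConnected (Y n)) →
      Tendsto (fun n => μ (Y n)) atTop (nhds 0) →
      Tendsto (fun n => Metric.diam (Y n)) atTop (nhds 0)) :
    LocallyConnectedSpace X := by
  by_contra hnl
  rw [locallyConnectedSpace_iff_connectedComponentIn_open] at hnl
  push_neg at hnl
  obtain ⟨U, hUopen, x₀, hx₀U, hnotopen⟩ := hnl
  rw [isOpen_iff_mem_nhds] at hnotopen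
  push_neg at hnotopen
  obtain ⟨z, hzC, hznhds⟩ := hnotopen
  have hCz : connectedComponentIn U x₀ = connectedComponentIn U z := connectedComponentIn_eq hzC
  set C := connectedComponentIn U x₀ with hCdef
  have hzU : z ∈ U := connectedComponentIn_subset U x₀ hzC
  -- X is nondegenerate
  have hnondeg : ∃ y : X, y ≠ z := by
    by_contra h
    push_neg at h
    have huniv : (Set.univ : Set X) = {z} := by ext w; simp [h w]
    have h1 : μ Set.univ = 1 := measure_univ
    rw [huniv, hatomless z] at h1
    exact one_ne_zero h1.symm
  obtain ⟨y, hy⟩ := hnondeg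
  obtain ⟨r, hr, hrU⟩ := Metric.isOpen_iff.mp hUopen z hzU
  have hdyz : 0 < dist y z := dist_pos.mpr hy
  set ε := min (r / 2) (dist y z / 2) with hεdef
  have hε : 0 < ε := lt_min (by linarith) (by linarith)
  have hεr : ε ≤ r / 2 := min_le_left _ _
  have hεd : ε ≤ dist y z / 2 := min_le_right _ _
  set K := Metric.closedBall z ε with hKdef
  have hKcl : IsClosed K := Metric.isClosed_closedBall
  have hKU : K ⊆ U := fun w hw =>
    hrU (Metric.mem_ball.mpr (lt_of_le_of_lt (Metric.mem_closedBall.mp hw) (by linarith)))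
  have hKne : K ≠ Set.univ := by
    intro h
    have hyK : y ∈ K := h ▸ Set.mem_univ y
    have := Metric.mem_closedBall.mp hyK
    linarith
  -- a sequence of points converging to z outside C
  have hqex : ∀ n : ℕ, ∃ p, dist p z < min (ε / 2) (1 / (n + 1 : ℝ)) ∧ p ∉ C := by
    intro n
    by_contra h
    push_neg at h
    apply hznhds
    refine Filter.mem_of_superset
      (Metric.ball_mem_nhds (ε := min (ε / 2) (1 / (n + 1 : ℝ))) z
        (lt_min (by linarith) (by positivity))) ?_
    intro p hp
    exact h p (Metric.mem_ball.mp hp)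
  choose q hq1 hq2 using hqex
  have hqhalf : ∀ n, dist (q n) z < ε / 2 := fun n => lt_of_lt_of_le (hq1 n) (min_le_left _ _)
  have hqK : ∀ n, q n ∈ K := fun n =>
    Metric.mem_closedBall.mpr (le_of_lt (lt_of_lt_of_le (hqhalf n) (by linarith)))
  have hqz : Tendsto q atTop (𝓝 z) := by
    rw [Metric.tendsto_atTop]
    intro δ hδ
    obtain ⟨N, hN⟩ := exists_nat_one_div_lt hδ
    refine ⟨N, fun n hn => ?_⟩
    have h1 : dist (q n) z < 1 / (n + 1 : ℝ) := lt_of_lt_of_le (hq1 n) (min_le_right _ _)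
    have h2 : (1 : ℝ) / (n + 1) ≤ 1 / (N + 1) := by
      apply one_div_le_one_div_of_le (by positivity)
      exact_mod_cast by omega
    linarith
  set D : ℕ → Set X := fun n => connectedComponentIn K (q n) with hDdef
  have hDne : ∀ n, (D n).Nonempty := fun n => connectedComponentIn_nonempty_iff.mpr (hqK n)
  have hDconn : ∀ n, IsConnected (D n) := fun n => isConnected_connectedComponentIn_iff.mpr (hqK n)
  have hDcomp : ∀ n, IsCompact (D n) := fun n =>
    aux_isCompact_connectedComponentIn hKcl.isCompact (q n)
  have hzD : ∀ n, z ∉ D n := by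
    intro n hzn
    apply hq2 n
    rw [hCz]
    exact isPreconnected_connectedComponentIn.subset_connectedComponentIn hzn
      ((connectedComponentIn_subset _ _).trans hKU) (mem_connectedComponentIn (hqK n))
  have hdiam : ∀ n, ε / 2 ≤ Metric.diam (D n) := by
    intro n
    obtain ⟨s, hsD, hsf⟩ := aux_bumping hKcl hKne (hqK n)
    have hs : dist s z = ε := Metric.frontier_closedBall_subset_sphere hsf
    have h1 : dist s (q n) ≤ Metric.diam (D n) :=
      Metric.dist_le_diam_of_mem (hDcomp n).isBounded hsD (mem_connectedComponentIn (hqK n))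
    have h2 : dist s z ≤ dist s (q n) + dist (q n) z := dist_triangle _ _ _
    have h3 := hqhalf n
    linarith
  -- infinitely many distinct components
  have hTinf : (Set.range D).Infinite := by
    intro hfin
    have hWcl : IsClosed (⋃ n, D n) := by
      rw [← Set.sUnion_range, Set.sUnion_eq_biUnion]
      exact hfin.isClosed_biUnion (by rintro _ ⟨n, rfl⟩; exact (hDcomp n).isClosed)
    have hzW : z ∈ closure (⋃ n, D n) :=
      mem_closure_of_tendsto hqz (Filter.Eventually.of_forall fun n =>
        Set.mem_iUnion.mpr ⟨n, mem_connectedComponentIn (hqK n)⟩)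
    rw [hWcl.closure_eq] at hzW
    obtain ⟨n, hn⟩ := Set.mem_iUnion.mp hzW
    exact hzD n hn
  have hdisj : ∀ a b : Set X, a ∈ Set.range D → b ∈ Set.range D → a ≠ b → Disjoint a b := by
    rintro _ _ ⟨m, rfl⟩ ⟨n, rfl⟩ hne
    rw [Set.disjoint_left]
    intro w hwm hwn
    exact hne ((connectedComponentIn_eq hwm).trans (connectedComponentIn_eq hwn).symm)
  set e := Set.Infinite.natEmbedding _ hTinf with hedef
  set Y : ℕ → Set X := fun k => ((e k : Set X)) with hYdef
  have hYmem : ∀ k, Y k ∈ Set.range D := fun k => (e k).2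
  have hYprop : ∀ k, (Y k).Nonempty ∧ IsCompact (Y k) ∧ IsConnected (Y k) := by
    intro k
    obtain ⟨n, hn⟩ := hYmem k
    exact hn ▸ ⟨hDne n, hDcomp n, hDconn n⟩
  have hYdisj : Pairwise (Function.onFun Disjoint Y) := by
    intro k l hkl
    apply hdisj _ _ (hYmem k) (hYmem l)
    intro he
    exact hkl (e.injective (Subtype.ext he))
  have hmeas : ∀ k, MeasurableSet (Y k) := fun k => (hYprop k).2.1.isClosed.measurableSet
  have htsum : ∑' k, μ (Y k) ≠ ⊤ := by
    rw [← measure_iUnion hYdisj hmeas]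
    exact (measure_lt_top μ _).ne
  have hμY : Tendsto (fun k => μ (Y k)) atTop (𝓝 0) :=
    ENNReal.tendsto_atTop_zero_of_tsum_ne_top htsum
  have hdY := hμ Y hYprop hμY
  have hge : ε / 2 ≤ (0 : ℝ) :=
    ge_of_tendsto hdY (Filter.Eventually.of_forall fun k => by
      obtain ⟨n, hn⟩ := hYmem k
      exact hn ▸ hdiam n)
  linarith
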